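/- Let r ≥ h+2 > 4 and suppose real numbers y_{ij} (for each 2-element subset {i,j} of [r]) satisfy: for every h-element subset S of [r], the sum of y_{ij} over all 2-element subsets {i,j} ⊆ S equals C(h,2)·c, for a fixed constant c. Then y_{ij} = c for all pairs {i,j}. -/

import Mathlib

open Finset

lemma sum_powersetCard_two_insert {r : ℕ} (y : Finset (Fin r) → ℝ)
    {b : Fin r} {A : Finset (Fin r)} (hb : b ∉ A) :
    ∑ T ∈ (insert b A).powersetCard 2, y T
      = (∑ T ∈ A.powersetCard 2, y T) + ∑ x ∈ A, y {b, x} := by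
  rw [show (2:ℕ) = Nat.succ 1 from rfl, powersetCard_succ_insert hb]
  rw [sum_union]
  · congr 1
    rw [sum_image]
    · rw [powersetCard_one, sum_map]
      rfl
    · intro s hs t ht hst
      simp only [mem_coe, mem_powersetCard] at hs ht
      have hbs : b ∉ s := fun h => hb (hs.1 h)
      have hbt : b ∉ t := fun h => hb (ht.1 h)
      have := congrArg (Finset.erase · b) hst
      simpa [erase_insert_of_ne, Finset.erase_insert hbs, Finset.erase_insert hbt] using this
  · rw [disjoint_left]
    intro s hs hs'
    simp only [mem_powersetCard] at hs
    simp only [mem_image, mem_powersetCard] at hs'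
    obtain ⟨t, ht, rfl⟩ := hs'
    exact hb (hs.1 (mem_insert_self b t))

theorem inclusion_system_unique_solution (r h : ℕ) (hh : 2 < h) (hr : h + 2 ≤ r)
    (y : Finset (Fin r) → ℝ) (c : ℝ)
    (hsum : ∀ S : Finset (Fin r), S.card = h →
      ∑ T ∈ S.powersetCard 2, y T = (h.choose 2 : ℝ) * c) :
    ∀ T : Finset (Fin r), T.card = 2 → y T = c := by
  have hcard_univ : (univ : Finset (Fin r)).card = r := by simp
  -- Lemma A: swap b ↔ b'
  have lemA : ∀ b b' : Fin r, ∀ A : Finset (Fin r), A.card = h - 1 → b ∉ A → b' ∉ A →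
      ∑ x ∈ A, y {b, x} = ∑ x ∈ A, y {b', x} := by
    intro b b' A hA hbA hb'A
    have h1 : (insert b A).card = h := by
      rw [card_insert_of_notMem hbA, hA]; omega
    have h2 : (insert b' A).card = h := by
      rw [card_insert_of_notMem hb'A, hA]; omega
    have e1 := hsum _ h1
    have e2 := hsum _ h2
    rw [sum_powersetCard_two_insert y hbA] at e1
    rw [sum_powersetCard_two_insert y hb'A] at e2
    linarith
  -- Lemma C: pairs sharing an element are equal
  have lemC : ∀ a b b' : Fin r, a ≠ b → a ≠ b' → b ≠ b' → y {a, b} = y {a, b'} := by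
    intro a b b' hab hab' hbb'
    set U : Finset (Fin r) := univ \ {b, b'} with hU
    have hUcard : U.card = r - 2 := by
      rw [hU, card_sdiff_of_subset (by simp), hcard_univ, card_pair hbb']
    set g : Fin r → ℝ := fun x => y {b, x} - y {b', x} with hg
    have key : ∀ A : Finset (Fin r), A ⊆ U → A.card = h - 1 → ∑ x ∈ A, g x = 0 := by
      intro A hAU hA
      have hbA : b ∉ A := fun hmem => by
        have := hAU hmem; simp [hU] at this
      have hb'A : b' ∉ A := fun hmem => by
        have := hAU hmem; simp [hU] at this
      have := lemA b b' A hA hbA hb'A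
      simp only [hg, sum_sub_distrib]
      linarith
    -- g constant on U
    have gconst : ∀ x ∈ U, ∀ x' ∈ U, g x = g x' := by
      intro x hx x' hx'
      rcases eq_or_ne x x' with rfl | hxx'
      · rfl
      · obtain ⟨B, hBsub, hBcard⟩ := exists_subset_card_eq (show h - 2 ≤ (U \ {x, x'}).card by
          rw [card_sdiff_of_subset (by intro z hz; simp at hz; rcases hz with rfl | rfl; exact hx; exact hx'),
            hUcard, card_pair hxx']
          omega)
        have hxB : x ∉ B := fun hm => by have := hBsub hm; simp at this
        have hx'B : x' ∉ B := fun hm => by have := hBsub hm; simp at this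
        have hsub : B ⊆ U := hBsub.trans (sdiff_subset)
        have k1 := key (insert x B) (insert_subset hx hsub)
          (by rw [card_insert_of_notMem hxB, hBcard]; omega)
        have k2 := key (insert x' B) (insert_subset hx' hsub)
          (by rw [card_insert_of_notMem hx'B, hBcard]; omega)
        rw [sum_insert hxB] at k1
        rw [sum_insert hx'B] at k2
        linarith
    -- g = 0 on U
    have gzero : ∀ x ∈ U, g x = 0 := by
      intro x hx
      obtain ⟨A, hAU, hAcard⟩ := exists_subset_card_eq (show h - 1 ≤ U.card by omega)
      have hsum0 := key A hAU hAcard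
      have hne : A.Nonempty := by
        rw [← card_pos, hAcard]; omega
      obtain ⟨x0, hx0⟩ := hne
      have hconst : ∀ z ∈ A, g z = g x0 := fun z hz => gconst z (hAU hz) x0 (hAU hx0)
      rw [Finset.sum_congr rfl hconst, sum_const, hAcard] at hsum0
      have : g x0 = 0 := by
        have hpos : (0:ℝ) < (h - 1 : ℕ) := by
          have : 0 < h - 1 := by omega
          exact_mod_cast this
        have := hsum0
        rw [nsmul_eq_mul] at this
        nlinarith
      rw [gconst x hx x0 (hAU hx0), this]
    have haU : a ∈ U := by simp [hU, hab, hab']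
    have := gzero a haU
    simp only [hg] at this
    have e1 : ({b, a} : Finset (Fin r)) = {a, b} := pair_comm b a
    have e2 : ({b', a} : Finset (Fin r)) = {a, b'} := pair_comm b' a
    rw [e1, e2] at this
    linarith
  -- all pairs equal
  have allEq : ∀ T T' : Finset (Fin r), T.card = 2 → T'.card = 2 → y T = y T' := by
    intro T T' hT hT'
    obtain ⟨a, b, hab, rfl⟩ := card_eq_two.mp hT
    obtain ⟨a', b', hab', rfl⟩ := card_eq_two.mp hT'
    -- connect {a,b} to {a',b'}
    rcases eq_or_ne a a' with rfl | haa'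
    · rcases eq_or_ne b b' with rfl | hbb'
      · rfl
      · exact lemC a b b' hab hab' hbb'
    · rcases eq_or_ne b b' with rfl | hbb'
      · rw [pair_comm a b, pair_comm a' b]
        exact lemC b a a' (Ne.symm hab) (Ne.symm hab') haa'
      · rcases eq_or_ne a b' with rfl | hab2
        · rcases eq_or_ne b a' with rfl | hba2
          · rw [pair_comm a b]
          · rw [pair_comm a' a]
            exact lemC a b a' hab haa' hba2
        · rcases eq_or_ne b a' with rfl | hba2
          · rw [pair_comm a b]
            exact lemC b a b' (Ne.symm hab) hab' hab2
          · have s1 : y {a, b} = y {a, b'} := lemC a b b' hab hab2 hbb'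
            have s2 : y {b', a} = y {b', a'} := lemC b' a a' (Ne.symm hab2) (Ne.symm hab') haa'
            rw [s1, pair_comm a b', s2, pair_comm b' a']
  -- conclude
  intro T hT
  obtain ⟨S, hSsub, hScard⟩ := exists_subset_card_eq (show h ≤ (univ : Finset (Fin r)).card by omega)
  have := hsum S hScard
  have hconst : ∀ T' ∈ S.powersetCard 2, y T' = y T := by
    intro T' hT'
    exact allEq T' T (mem_powersetCard.mp hT').2 hT
  rw [Finset.sum_congr rfl hconst, sum_const, card_powersetCard, hScard, nsmul_eq_mul] at this
  have hchoose : (0:ℝ) < (h.choose 2 : ℕ) := by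
    have : 0 < h.choose 2 := Nat.choose_pos (by omega)
    exact_mod_cast this
  nlinarith
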